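/- Let T = 2^ℓ and let 0 ≤ r < T. Then the number of segments in Seg(r) is at most 2(ℓ+1). -/

import Mathlib

/-- The procedure `FormSegments`, starting at stage `s` with current time `t`, stopping
once `t ≥ T`.  Each produced entry `(s, a, b)` records the stage `s` at which the
interval `[a, b]` was appended. -/
def segAux (T : ℕ) (s t : ℕ) : List (ℕ × ℕ × ℕ) :=
  if h : t < T then
    if 2 ^ (s + 1) ∣ t then
      (s, t, t + 2 ^ s) :: (s, t + 2 ^ s, t + 2 ^ (s + 1)) ::
        segAux T (s + 1) (t + 2 ^ (s + 1))
    else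
      (s, t, t + 2 ^ s) :: segAux T (s + 1) (t + 2 ^ s)
  else []
termination_by T - t
decreasing_by
  · have h1 : 0 < 2 ^ (s + 1) := Nat.pow_pos (by norm_num)
    omega
  · have h1 : 0 < 2 ^ s := Nat.pow_pos (by norm_num)
    omega

/-- `Seg T r` : the sequence of intervals of `Seg(r)` (forgetting the stages). -/
def Seg (T rj : ℕ) : List (ℕ × ℕ) := (segAux T 0 rj).map fun x => (x.2.1, x.2.2)

/-- for `T = 2^ℓ` and `0 ≤ r < T`, the number of segments of `Seg(r)`
is at most `2(ℓ+1)`. -/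
lemma segAux_nil (T s t : ℕ) (h : ¬ t < T) : segAux T s t = [] := by
  rw [segAux, dif_neg h]

lemma segAux_len_top (ℓ t : ℕ) (hd : 2 ^ ℓ ∣ t) :
    (segAux (2 ^ ℓ) ℓ t).length ≤ 2 := by
  rw [segAux]
  split_ifs with h1 h2
  · have ht0 : t = 0 := by
      rcases hd with ⟨c, rfl⟩
      have : c = 0 := by
        by_contra hc
        have : 2 ^ ℓ ≤ 2 ^ ℓ * c := Nat.le_mul_of_pos_right _ (Nat.pos_of_ne_zero hc)
        omega
      simp [this]
    subst ht0
    have h3 : ¬ (0 + 2 ^ (ℓ + 1) < 2 ^ ℓ) := by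
      have := Nat.pow_le_pow_right (show 0 < 2 by norm_num) (show ℓ ≤ ℓ + 1 by omega)
      omega
    rw [segAux_nil _ _ _ h3]
    simp
  · exfalso
    rcases hd with ⟨c, rfl⟩
    have hc : c = 0 := by
      by_contra hc
      have : 2 ^ ℓ ≤ 2 ^ ℓ * c := Nat.le_mul_of_pos_right _ (Nat.pos_of_ne_zero hc)
      omega
    exact h2 (by simp [hc])
  · simp

lemma segAux_len (ℓ k : ℕ) : ∀ s t, ℓ - s ≤ k → s ≤ ℓ → 2 ^ s ∣ t →
    (segAux (2 ^ ℓ) s t).length ≤ 2 * (ℓ + 1 - s) := by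
  induction k with
  | zero =>
    intro s t hk hs hd
    have hsℓ : s = ℓ := by omega
    subst hsℓ
    have := segAux_len_top s t hd
    omega
  | succ k ih =>
    intro s t hk hs hd
    rcases Nat.eq_or_lt_of_le hs with rfl | hlt
    · have := segAux_len_top s t hd
      omega
    rw [segAux]
    split_ifs with h1 h2
    · have := ih (s + 1) (t + 2 ^ (s + 1)) (by omega) (by omega)
        (Dvd.dvd.add h2 dvd_rfl)
      simp only [List.length_cons]
      omega
    · have hd' : 2 ^ (s + 1) ∣ t + 2 ^ s := by
        rcases hd with ⟨c, rfl⟩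
        have hodd : ¬ 2 ∣ c := by
          rintro ⟨d, rfl⟩
          exact h2 ⟨d, by ring⟩
        obtain ⟨d, rfl⟩ : ∃ d, c = 2 * d + 1 := ⟨c / 2, by omega⟩
        exact ⟨d + 1, by ring⟩
      have := ih (s + 1) (t + 2 ^ s) (by omega) (by omega) hd'
      simp only [List.length_cons]
      omega
    · simp

theorem stmt8 (ℓ r : ℕ) (hr : r < 2 ^ ℓ) :
    (segAux (2 ^ ℓ) 0 r).length ≤ 2 * (ℓ + 1) := by
  have := segAux_len ℓ ℓ 0 r (by omega) (by omega) (by simpa using one_dvd r)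
  simpa using this
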